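/- The Segal–Bargmann transform of level k maps Hermite functions to quaternionic Hermite polynomials: for all j, k ∈ ℕ and every q ∈ ℍ, π^{−3/4}·(2^k·k!)^{−1/2} · ∫_ℝ exp(−(t² + q²)/2 + √2·t·q) · H_k((q+q̄)/√2 − t) · h_j(t) dt = π^{−1/4}·2^{j/2}·(k!)^{−1/2} · H^Q_{j,k}(q,q̄). -/

import Mathlib

open scoped Quaternion
open MeasureTheory

noncomputable section

/-- The quaternionic Hermite polynomial `H^Q_{m,n}(q,q̄)`. -/
def HQ (m n : ℕ) (q qb : ℍ[ℝ]) : ℍ[ℝ] :=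
  ((m.factorial : ℝ) * (n.factorial : ℝ)) •
    ∑ j ∈ Finset.range (min m n + 1),
      ((-1 : ℝ) ^ j / ((j.factorial : ℝ) * ((m - j).factorial : ℝ) * ((n - j).factorial : ℝ))) •
        (q ^ (m - j) * qb ^ (n - j))

/-- The `j`-th physicists' Hermite polynomial `H_j(t) = (−1)^j e^{t²} (d/dt)^j e^{−t²}`. -/
def physHermite (j : ℕ) (t : ℝ) : ℝ :=
  (-1 : ℝ) ^ j * Real.exp (t ^ 2) * iteratedDeriv j (fun s : ℝ => Real.exp (-s ^ 2)) t

/-- The `j`-th Hermite function `h_j(t) = e^{−t²/2} H_j(t)`. -/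
def hermiteFun (j : ℕ) (t : ℝ) : ℝ :=
  Real.exp (-t ^ 2 / 2) * physHermite j t

open Polynomial



def Ph : ℕ → Polynomial ℝ
  | 0 => 1
  | k+1 => C 2 * X * Ph k - (Ph k).derivative

lemma Ph_derivative_succ (k : ℕ) :
    (Ph (k+1)).derivative = C (2*((k:ℝ)+1)) * Ph k := by
  induction k with
  | zero => simp [Ph]
  | succ m ih =>
    have hdef : Ph (m+2) = C 2 * X * Ph (m+1) - (Ph (m+1)).derivative := rfl
    have hdef2 : Ph (m+1) = C 2 * X * Ph m - (Ph m).derivative := rfl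
    rw [hdef, derivative_sub, derivative_mul, derivative_mul, derivative_C, derivative_X, ih,
      derivative_C_mul]
    push_cast
    have h2 : (2*((m:ℝ)+1+1)) = 2 + 2*((m:ℝ)+1) := by ring
    rw [h2, C_add, hdef2]
    ring

lemma Ph_derivative (k : ℕ) : (Ph k).derivative = C (2*(k:ℝ)) * Ph (k-1) := by
  cases k with
  | zero => simp [Ph]
  | succ m => simpa using Ph_derivative_succ m


lemma iteratedDeriv_gauss (k : ℕ) (t : ℝ) :
    iteratedDeriv k (fun s : ℝ => Real.exp (-s ^ 2)) t
      = (-1:ℝ)^k * Real.exp (-t^2) * (Ph k).eval t := by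
  induction k generalizing t with
  | zero => simp [Ph]
  | succ m ih =>
    rw [iteratedDeriv_succ]
    have hfun : iteratedDeriv m (fun s : ℝ => Real.exp (-s ^ 2))
        = fun t => (-1:ℝ)^m * Real.exp (-t^2) * (Ph m).eval t := funext ih
    rw [hfun]
    have h1 : HasDerivAt (fun t : ℝ => -t^2) (-(2*t)) t := by
      have h := (hasDerivAt_pow 2 t).neg
      norm_num at h
      exact h
    have h2 : HasDerivAt (fun t : ℝ => Real.exp (-t^2)) (Real.exp (-t^2) * (-(2*t))) t :=
      h1.exp
    have h3 : HasDerivAt (fun t : ℝ => (Ph m).eval t) ((Ph m).derivative.eval t) t :=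
      (Ph m).hasDerivAt t
    have h4 : HasDerivAt (fun t : ℝ => (-1:ℝ)^m * Real.exp (-t^2) * (Ph m).eval t)
        ((-1:ℝ)^m * (Real.exp (-t^2) * (-(2*t)) * (Ph m).eval t
          + Real.exp (-t^2) * (Ph m).derivative.eval t)) t := by
      simpa [mul_assoc, mul_add] using ((h2.mul h3).const_mul ((-1:ℝ)^m))
    rw [h4.deriv]
    have hP : Ph (m+1) = C 2 * X * Ph m - (Ph m).derivative := rfl
    rw [hP]
    simp only [eval_sub, eval_mul, eval_C, eval_X, pow_succ]
    ring

lemma physHermite_eq (k : ℕ) (t : ℝ) : physHermite k t = (Ph k).eval t := by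
  rw [physHermite, iteratedDeriv_gauss]
  have h1 : Real.exp (t^2) * Real.exp (-t^2) = 1 := by rw [← Real.exp_add]; simp
  have h2 : ((-1:ℝ))^k * (-1)^k = 1 := by
    rw [← pow_add, ← two_mul, pow_mul]; norm_num
  calc (-1:ℝ) ^ k * Real.exp (t ^ 2) * ((-1) ^ k * Real.exp (-t ^ 2) * (Ph k).eval t)
      = ((-1:ℝ)^k * (-1)^k) * (Real.exp (t^2) * Real.exp (-t^2)) * (Ph k).eval t := by ring
    _ = (Ph k).eval t := by rw [h1, h2]; ring



lemma integrable_pow_gauss (n : ℕ) :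
    Integrable fun x : ℝ => x ^ n * Real.exp (-(1/2) * x ^ 2) := by
  have h := integrable_rpow_mul_exp_neg_mul_sq (b := 1/2) (by norm_num)
    (s := (n:ℝ)) ((by norm_num : (-1:ℝ) < 0).trans_le (Nat.cast_nonneg n))
  simpa [Real.rpow_natCast] using h

lemma abs_pow_le_one_add (t : ℝ) (i : ℕ) : |t| ^ i ≤ 1 + t ^ (2*i) := by
  have ht2 : (0:ℝ) ≤ t ^ (2*i) := by rw [pow_mul]; positivity
  rcases le_total (|t|) 1 with h | h
  · have : |t| ^ i ≤ 1 := pow_le_one₀ (abs_nonneg t) h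
    linarith
  · have h1 : |t| ^ i ≤ |t| ^ (2*i) :=
      pow_le_pow_right₀ h (by omega)
    have h2 : |t| ^ (2*i) = t ^ (2*i) := by
      rw [pow_mul, pow_mul, sq_abs]
    linarith

def Eg (b c : ℂ) (t : ℝ) : ℂ := Complex.exp (-(t:ℂ)^2 + b*t + c)

variable {b c : ℂ}

lemma norm_Eg (b c : ℂ) (t : ℝ) :
    ‖Eg b c t‖ = Real.exp (-t^2 + b.re*t + c.re) := by
  rw [Eg, Complex.norm_exp]
  congr 1
  simp [← Complex.ofReal_pow, Complex.mul_re]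

lemma continuous_Eg (b c : ℂ) : Continuous (Eg b c) := by
  apply Complex.continuous_exp.comp
  fun_prop

lemma continuous_evalW (W : Polynomial ℂ) :
    Continuous fun t : ℝ => W.eval (t:ℂ) :=
  W.continuous.comp Complex.continuous_ofReal

lemma integrable_Eg_poly (b c : ℂ) (W : Polynomial ℂ) :
    Integrable fun t : ℝ => Eg b c t * W.eval (t:ℂ) := by
  set N := W.natDegree + 1 with hN
  have hgi : ∀ i : ℕ, Integrable
      (fun t : ℝ => (1 + t^(2*i)) * Real.exp (-(1/2) * t^2)) := by
    intro i
    have h1 := integrable_exp_neg_mul_sq (b := (1/2:ℝ)) (by norm_num)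
    have h2 := integrable_pow_gauss (2*i)
    refine (h1.add h2).congr ?_
    filter_upwards with t
    simp only [Pi.add_apply]
    ring
  have hg : Integrable (fun t : ℝ => Real.exp (c.re + b.re^2/2) *
      ∑ i ∈ Finset.range N, ‖W.coeff i‖ * ((1 + t^(2*i)) * Real.exp (-(1/2)*t^2))) :=
    (integrable_finset_sum _ (fun i _ => (hgi i).const_mul _)).const_mul _
  refine hg.mono' ?_ ?_
  · exact ((continuous_Eg b c).mul (continuous_evalW W)).aestronglyMeasurable
  · filter_upwards with t
    have hS_nonneg : (0:ℝ) ≤ ∑ i ∈ Finset.range N, ‖W.coeff i‖ * (1 + t^(2*i)) := by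
      apply Finset.sum_nonneg
      intro i _
      have ht2 : (0:ℝ) ≤ t ^ (2*i) := by rw [pow_mul]; positivity
      have := norm_nonneg (W.coeff i)
      nlinarith
    have step1 : Real.exp (-t^2 + b.re*t + c.re)
        ≤ Real.exp (c.re + b.re^2/2) * Real.exp (-(1/2)*t^2) := by
      rw [← Real.exp_add]
      apply Real.exp_le_exp.2
      nlinarith [sq_nonneg (t - b.re)]
    have step2 : ‖W.eval (t:ℂ)‖ ≤ ∑ i ∈ Finset.range N, ‖W.coeff i‖ * (1 + t^(2*i)) := by
      have hev : W.eval ((t:ℝ):ℂ) = ∑ i ∈ Finset.range N, W.coeff i * (t:ℂ)^i := by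
        rw [hN]; exact W.eval_eq_sum_range _
      rw [hev]
      refine (norm_sum_le _ _).trans ?_
      apply Finset.sum_le_sum
      intro i _
      rw [norm_mul, norm_pow, Complex.norm_real, Real.norm_eq_abs]
      exact mul_le_mul_of_nonneg_left (abs_pow_le_one_add t i) (norm_nonneg _)
    calc ‖Eg b c t * W.eval (t:ℂ)‖
        = Real.exp (-t^2 + b.re*t + c.re) * ‖W.eval (t:ℂ)‖ := by
          rw [norm_mul, norm_Eg]
      _ ≤ Real.exp (-t^2 + b.re*t + c.re) *
            ∑ i ∈ Finset.range N, ‖W.coeff i‖ * (1 + t^(2*i)) :=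
          mul_le_mul_of_nonneg_left step2 (Real.exp_nonneg _)
      _ ≤ (Real.exp (c.re + b.re^2/2) * Real.exp (-(1/2)*t^2)) *
            ∑ i ∈ Finset.range N, ‖W.coeff i‖ * (1 + t^(2*i)) :=
          mul_le_mul_of_nonneg_right step1 hS_nonneg
      _ = Real.exp (c.re + b.re^2/2) *
            ∑ i ∈ Finset.range N, ‖W.coeff i‖ * ((1 + t^(2*i)) * Real.exp (-(1/2)*t^2)) := by
          rw [Finset.mul_sum, Finset.mul_sum]
          apply Finset.sum_congr rfl
          intro i _
          ring

def Jint (b c : ℂ) (W : Polynomial ℂ) : ℂ := ∫ t : ℝ, Eg b c t * W.eval (t:ℂ)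

lemma Jint_add (W₁ W₂ : Polynomial ℂ) :
    Jint b c (W₁ + W₂) = Jint b c W₁ + Jint b c W₂ := by
  simp only [Jint, eval_add, mul_add]
  exact integral_add (integrable_Eg_poly b c W₁) (integrable_Eg_poly b c W₂)

lemma Jint_C_mul (s : ℂ) (W : Polynomial ℂ) :
    Jint b c (C s * W) = s * Jint b c W := by
  simp only [Jint, eval_mul, eval_C]
  have h : ∀ t : ℝ, Eg b c t * (s * W.eval (t:ℂ)) = s * (Eg b c t * W.eval (t:ℂ)) := by
    intro t; ring
  simp_rw [h]
  exact integral_const_mul s _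

lemma hasDerivAt_coe (t : ℝ) : HasDerivAt (fun y : ℝ => ((y:ℝ):ℂ)) 1 t :=
  (hasDerivAt_id ((t:ℝ):ℂ)).comp_ofReal

lemma hasDerivAt_evalW (W : Polynomial ℂ) (t : ℝ) :
    HasDerivAt (fun y : ℝ => W.eval ((y:ℝ):ℂ)) (W.derivative.eval (t:ℂ)) t :=
  (W.hasDerivAt ((t:ℝ):ℂ)).comp_ofReal

lemma hasDerivAt_Eg (b c : ℂ) (t : ℝ) :
    HasDerivAt (Eg b c) ((b - 2*t) * Eg b c t) t := by
  have hp := hasDerivAt_evalW (-(X^2) + (C b) * X + C c) t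
  have heq : (fun y : ℝ => (-(X^2) + (C b) * X + C c : Polynomial ℂ).eval ((y:ℝ):ℂ))
      = fun y : ℝ => (-((y:ℝ):ℂ)^2 + b*y + c) := by
    funext y; simp
  have hd : (derivative (-(X^2) + (C b) * X + C c : Polynomial ℂ)).eval ((t:ℝ):ℂ)
      = b - 2*t := by
    simp [derivative_pow]; ring
  rw [heq, hd] at hp
  have h2 := hp.cexp
  convert h2 using 1
  · rfl
  · rw [Eg]; ring

lemma Jint_IBP (W : Polynomial ℂ) :
    Jint b c ((C b - 2*X) * W + W.derivative) = 0 := by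
  have key : ∫ t : ℝ, Eg b c t * W.derivative.eval (t:ℂ)
      = - ∫ t : ℝ, Eg b c t * ((C b - 2*X) * W).eval (t:ℂ) := by
    have h := integral_mul_deriv_eq_deriv_mul_of_integrable
      (u := Eg b c) (v := fun t : ℝ => W.eval (t:ℂ))
      (u' := fun t : ℝ => (b - 2*t) * Eg b c t)
      (v' := fun t : ℝ => W.derivative.eval (t:ℂ))
      (fun t _ => hasDerivAt_Eg b c t) (fun t _ => hasDerivAt_evalW W t)
      ?_ ?_ ?_
    · rw [show (fun t : ℝ => Eg b c t * W.derivative.eval (t:ℂ))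
          = (Eg b c) * (fun t : ℝ => W.derivative.eval (t:ℂ)) from rfl] at *
      rw [h]
      congr 1
      apply integral_congr_ae
      filter_upwards with t
      simp only [Pi.mul_apply, eval_mul, eval_sub, eval_C, eval_mul, eval_ofNat, eval_X]
      ring
    · have := integrable_Eg_poly b c W.derivative
      exact this.congr (by filter_upwards with t using rfl)
    · have := integrable_Eg_poly b c ((C b - 2*X) * W)
      apply this.congr
      filter_upwards with t
      simp only [Pi.mul_apply, eval_mul, eval_sub, eval_C, eval_ofNat, eval_X]
      ring
    · have := integrable_Eg_poly b c W
      exact this.congr (by filter_upwards with t using rfl)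
  rw [Jint_add]
  unfold Jint
  rw [key]
  ring

lemma Jint_one : Jint b c 1 = (Real.sqrt Real.pi : ℂ) * Complex.exp (c + b^2/4) := by
  have h : ∀ t : ℝ, Eg b c t * (1:Polynomial ℂ).eval (t:ℂ)
      = Complex.exp ((-1) * (t:ℂ)^2 + b*t + c) := by
    intro t
    rw [eval_one, mul_one, Eg]
    ring_nf
  rw [Jint]
  simp_rw [h]
  rw [integral_cexp_quadratic (by norm_num : (-1:ℂ).re < 0) b c]
  have h1 : ((Real.pi:ℂ) / -(-1)) = ((Real.pi:ℝ):ℂ) := by norm_num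
  rw [h1, show ((1:ℂ)/2) = ((1/2:ℝ):ℂ) by norm_num,
    ← Complex.ofReal_cpow Real.pi_pos.le, ← Real.sqrt_eq_rpow]
  congr 1
  ring


lemma Jint_sub {b c : ℂ} (W₁ W₂ : Polynomial ℂ) :
    Jint b c (W₁ - W₂) = Jint b c W₁ - Jint b c W₂ := by
  simp only [Jint, eval_sub, mul_sub]
  exact integral_sub (integrable_Eg_poly b c W₁) (integrable_Eg_poly b c W₂)


def HC (m n : ℕ) (z w : ℂ) : ℂ :=
  ((m.factorial : ℝ) * (n.factorial : ℝ)) •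
    ∑ i ∈ Finset.range (min m n + 1),
      ((-1 : ℝ) ^ i / ((i.factorial : ℝ) * ((m - i).factorial : ℝ) * ((n - i).factorial : ℝ))) •
        (z ^ (m - i) * w ^ (n - i))

def HCt (m n i : ℕ) (z w : ℂ) : ℂ :=
  (-1:ℂ)^i * (i.factorial : ℂ) * (m.choose i : ℂ) * (n.choose i : ℂ) * (z ^ (m-i) * w ^ (n-i))

lemma HC_eq_choose (m n N : ℕ) (h : min m n < N) (z w : ℂ) :
    HC m n z w = ∑ i ∈ Finset.range N, HCt m n i z w := by
  have h1 : ∑ i ∈ Finset.range N, HCt m n i z w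
      = ∑ i ∈ Finset.range (min m n + 1), HCt m n i z w := by
    refine (Finset.sum_subset (Finset.range_subset_range.2 h) ?_).symm
    intro i _ hi
    simp only [Finset.mem_range, not_lt] at hi
    have : m < i ∨ n < i := by omega
    rcases this with hmi | hni
    · simp [HCt, Nat.choose_eq_zero_of_lt hmi]
    · simp [HCt, Nat.choose_eq_zero_of_lt hni]
  rw [h1, HC, Finset.smul_sum]
  apply Finset.sum_congr rfl
  intro i hi
  simp only [Finset.mem_range] at hi
  have him : i ≤ m := by omega
  have hin : i ≤ n := by omega
  rw [smul_smul, HCt]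
  have hfm : ((m - i).factorial : ℝ) ≠ 0 := Nat.cast_ne_zero.2 (Nat.factorial_ne_zero _)
  have hfn : ((n - i).factorial : ℝ) ≠ 0 := Nat.cast_ne_zero.2 (Nat.factorial_ne_zero _)
  have hfi : ((i).factorial : ℝ) ≠ 0 := Nat.cast_ne_zero.2 (Nat.factorial_ne_zero _)
  have hm : ((m.factorial : ℝ)) = (m.choose i) * i.factorial * (m-i).factorial := by
    exact_mod_cast (Nat.choose_mul_factorial_mul_factorial him).symm
  have hn : ((n.factorial : ℝ)) = (n.choose i) * i.factorial * (n-i).factorial := by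
    exact_mod_cast (Nat.choose_mul_factorial_mul_factorial hin).symm
  have hcoef : (m.factorial : ℝ) * (n.factorial : ℝ) *
      ((-1 : ℝ) ^ i / ((i.factorial : ℝ) * ((m - i).factorial : ℝ) * ((n - i).factorial : ℝ)))
      = (-1:ℝ)^i * (i.factorial : ℝ) * (m.choose i : ℝ) * (n.choose i : ℝ) := by
    rw [hm, hn]
    field_simp
  rw [Complex.real_smul, hcoef]
  push_cast
  ring

lemma Nid (m n i : ℕ) :
    (i+1).factorial * ((m+1).choose (i+1)) * (n.choose (i+1))
      = (i+1).factorial * (m.choose (i+1)) * (n.choose (i+1))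
        + n * (i.factorial * (m.choose i) * ((n-1).choose i)) := by
  cases n with
  | zero => simp
  | succ s =>
    simp only [Nat.add_sub_cancel]
    have h1 : (s+1) * s.choose i = (s+1).choose (i+1) * (i+1) := Nat.add_one_mul_choose_eq s i
    have h2 : (m+1).choose (i+1) = m.choose i + m.choose (i+1) := Nat.choose_succ_succ' m i
    have h3 : (i+1).factorial = (i+1) * i.factorial := Nat.factorial_succ i
    zify at h1 h2 h3 ⊢
    rw [h2, h3]
    linear_combination (-(i.factorial:ℤ) * (m.choose i)) * h1

lemma HCt_succ (m n i : ℕ) (z w : ℂ) :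
    HCt (m+1) n (i+1) z w = z * HCt m n (i+1) z w - (n:ℂ) * HCt m (n-1) i z w := by
  have hz : (m+1) - (i+1) = m - i := by omega
  have hw : (n-1) - i = n - (i+1) := by omega
  have hN := Nid m n i
  rcases lt_or_ge i m with him | him
  · have hzz : m - i = (m - (i+1)) + 1 := by omega
    simp only [HCt, hz, hw, hzz, pow_succ]
    have hNC : (((i+1).factorial : ℂ)) * ((m+1).choose (i+1) : ℂ) * (n.choose (i+1) : ℂ)
        = ((i+1).factorial : ℂ) * (m.choose (i+1) : ℂ) * (n.choose (i+1) : ℂ)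
          + (n:ℂ) * ((i.factorial : ℂ) * (m.choose i : ℂ) * ((n-1).choose i : ℂ)) := by
      exact_mod_cast congrArg (Nat.cast : ℕ → ℂ) hN
    linear_combination ((-1:ℂ)^(i+1) * z^(m-(i+1)) * z * w^(n-(i+1))) * hNC
  · have hc : m.choose (i+1) = 0 := Nat.choose_eq_zero_of_lt (by omega)
    have hzz : m - (i+1) = m - i := by omega
    rw [hc] at hN
    simp only [Nat.mul_zero, Nat.zero_mul, mul_zero, zero_mul, Nat.zero_add, zero_add] at hN
    simp only [HCt, hz, hw, hzz, hc]
    have hNC : (((i+1).factorial : ℂ)) * ((m+1).choose (i+1) : ℂ) * (n.choose (i+1) : ℂ)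
        = (n:ℂ) * ((i.factorial : ℂ) * (m.choose i : ℂ) * ((n-1).choose i : ℂ)) := by
      exact_mod_cast congrArg (Nat.cast : ℕ → ℂ) hN
    push_cast
    linear_combination ((-1:ℂ)^(i+1) * z^(m-i) * w^(n-(i+1))) * hNC

lemma HC_rec (m n : ℕ) (z w : ℂ) :
    HC (m+1) n z w = z * HC m n z w - (n:ℂ) * HC m (n-1) z w := by
  set N := m + n + 2 with hNdef
  have h0 : HCt (m+1) n 0 z w = z * HCt m n 0 z w := by
    simp only [HCt, Nat.sub_zero, Nat.choose_zero_right, Nat.factorial_zero, pow_zero]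
    rw [pow_succ]
    push_cast
    ring
  rw [HC_eq_choose (m+1) n (N+1) (by omega), HC_eq_choose m n (N+1) (by omega),
      HC_eq_choose m (n-1) N (by omega)]
  rw [Finset.sum_range_succ' (fun i => HCt (m+1) n i z w) N,
      Finset.sum_range_succ' (fun i => HCt m n i z w) N]
  have hsum : ∑ i ∈ Finset.range N, HCt (m+1) n (i+1) z w
      = ∑ i ∈ Finset.range N, (z * HCt m n (i+1) z w - (n:ℂ) * HCt m (n-1) i z w) := by
    apply Finset.sum_congr rfl
    intro i _
    exact HCt_succ m n i z w
  rw [hsum, h0, Finset.sum_sub_distrib, ← Finset.mul_sum, ← Finset.mul_sum]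
  ring

lemma HC_zero (k : ℕ) (z w : ℂ) : HC 0 k z w = w ^ k := by
  have hk : ((k.factorial:ℝ)) ≠ 0 := Nat.cast_ne_zero.2 (Nat.factorial_ne_zero _)
  rw [HC, show min 0 k = 0 from by omega, Finset.sum_range_one, smul_smul, Complex.real_smul]
  norm_num
  have hk' : ((k.factorial:ℂ)) ≠ 0 := Nat.cast_ne_zero.2 (Nat.factorial_ne_zero _)
  field_simp


-- ===== Part 4 : the complex-side computation =====

def bz (z : ℂ) : ℂ := (Real.sqrt 2 : ℂ) * z
def cz (z : ℂ) : ℂ := -z^2/2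
def az (z : ℂ) : ℝ := Real.sqrt 2 * z.re

def Pc (k : ℕ) : Polynomial ℂ := (Ph k).map (algebraMap ℝ ℂ)
def Wk (z : ℂ) (k : ℕ) : Polynomial ℂ := (Pc k).comp (C ((az z : ℝ):ℂ) - X)

lemma Pc_zero : Pc 0 = 1 := by simp [Pc, Ph]

lemma Wk_zero (z : ℂ) : Wk z 0 = 1 := by simp [Wk, Pc_zero]

lemma Pc_succ (k : ℕ) : Pc (k+1) = 2 * X * Pc k - derivative (Pc k) := by
  have h : Ph (k+1) = C 2 * X * Ph k - (Ph k).derivative := rfl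
  simp only [Pc, h, Polynomial.map_sub, Polynomial.map_mul, map_C, Polynomial.map_X,
    derivative_map]
  have h2 : (C ((algebraMap ℝ ℂ) 2) : Polynomial ℂ) = 2 := by
    rw [map_ofNat (algebraMap ℝ ℂ) 2]
    exact map_ofNat C 2
  rw [h2]

lemma Pc_derivative (k : ℕ) : derivative (Pc k) = C (2*(k:ℂ)) * Pc (k-1) := by
  rw [Pc, derivative_map, Ph_derivative k, Polynomial.map_mul, map_C]
  congr 2
  push_cast
  ring

lemma Wk_derivative (z : ℂ) (k : ℕ) :
    derivative (Wk z k) = C (-2*(k:ℂ)) * Wk z (k-1) := by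
  have hCn : (C (-2*(k:ℂ)) : Polynomial ℂ) = -C (2*(k:ℂ)) := by
    rw [show (-2*(k:ℂ)) = -(2*(k:ℂ)) from by ring, map_neg]
  rw [Wk, derivative_comp, Pc_derivative, Wk, hCn]
  simp only [derivative_sub, derivative_C, derivative_X, mul_comp, C_comp, zero_sub]
  ring

lemma Wk_succ (z : ℂ) (k : ℕ) :
    Wk z (k+1) = 2 * (C ((az z:ℝ):ℂ) - X) * Wk z k + derivative (Wk z k) := by
  have hD : derivative (Wk z k)
      = -((derivative (Pc k)).comp (C ((az z:ℝ):ℂ) - X)) := by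
    rw [Wk, derivative_comp]
    simp only [derivative_sub, derivative_C, derivative_X, zero_sub]
    ring
  rw [Wk, Pc_succ, sub_comp, mul_comp, mul_comp, X_comp, hD, Wk]
  simp only [ofNat_comp]
  ring

def Iint (z : ℂ) (j k : ℕ) : ℂ := Jint (bz z) (cz z) (Wk z k * Pc j)

lemma Iint_00 (z : ℂ) : Iint z 0 0 = (Real.sqrt Real.pi : ℂ) := by
  rw [Iint, Wk_zero, Pc_zero, one_mul, Jint_one]
  have h2 : (bz z)^2 = 2 * z^2 := by
    rw [bz, mul_pow]
    congr 1
    rw [← Complex.ofReal_pow, Real.sq_sqrt (by norm_num : (0:ℝ) ≤ 2)]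
    norm_num
  have h0 : cz z + (bz z)^2/4 = 0 := by rw [cz, h2]; ring
  rw [h0, Complex.exp_zero, mul_one]

lemma conj_eq (z : ℂ) : (starRingEnd ℂ) z = 2*(z.re:ℂ) - z := by
  have := Complex.add_conj z
  push_cast at this
  linear_combination this

lemma Iint_zero_succ (z : ℂ) (k : ℕ) :
    Iint z 0 (k+1) = ((Real.sqrt 2 : ℂ) * (starRingEnd ℂ) z) * Iint z 0 k := by
  have hC : C (2*((az z:ℝ):ℂ) - bz z) = 2 * C ((az z:ℝ):ℂ) - C (bz z) := by
    rw [map_sub, map_mul, map_ofNat]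
  have hpoly : Wk z (k+1) * Pc 0 = C (2*((az z:ℝ):ℂ) - bz z) * (Wk z k * Pc 0)
      + ((C (bz z) - 2*X) * (Wk z k * Pc 0) + derivative (Wk z k * Pc 0)) := by
    rw [Pc_zero, mul_one, mul_one, Wk_succ, hC]
    ring
  rw [Iint, hpoly, Jint_add, Jint_C_mul, Jint_IBP, add_zero, ← Iint]
  congr 1
  rw [az, bz, conj_eq]
  push_cast
  ring

lemma Iint_succ (z : ℂ) (j k : ℕ) :
    Iint z (j+1) k = bz z * Iint z j k + (-2*(k:ℂ)) * Iint z j (k-1) := by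
  have hpoly : Wk z k * Pc (j+1) = (C (bz z) * (Wk z k * Pc j)
      + C (-2*(k:ℂ)) * (Wk z (k-1) * Pc j))
      - ((C (bz z) - 2*X) * (Wk z k * Pc j) + derivative (Wk z k * Pc j)) := by
    rw [Pc_succ, derivative_mul, Wk_derivative]
    ring
  rw [Iint, hpoly, Jint_sub, Jint_add, Jint_C_mul, Jint_C_mul, Jint_IBP, sub_zero,
    ← Iint, ← Iint]

lemma Iint_eq (z : ℂ) (j : ℕ) : ∀ k, Iint z j k
    = (Real.sqrt Real.pi : ℂ) * (Real.sqrt 2 : ℂ)^(j+k) * HC j k z ((starRingEnd ℂ) z) := by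
  induction j with
  | zero =>
    intro k
    induction k with
    | zero => rw [Iint_00, HC_zero]; norm_num
    | succ n ih =>
      rw [Iint_zero_succ, ih, HC_zero, HC_zero]
      rw [show 0 + (n+1) = (0+n) + 1 from by omega, pow_succ, pow_succ]
      ring
  | succ j ihj =>
    intro k
    rw [Iint_succ, ihj k, ihj (k-1), HC_rec]
    cases k with
    | zero =>
      rw [bz]
      norm_num
      rw [show j + 1 = j + 0 + 1 from by omega, pow_succ]
      ring
    | succ n =>
      have h2 : (Real.sqrt 2:ℂ) * (Real.sqrt 2:ℂ) = 2 := by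
        rw [← Complex.ofReal_mul, Real.mul_self_sqrt (by norm_num : (0:ℝ) ≤ 2)]
        norm_num
      rw [show j + (n+1) = (j+n) + 1 from by omega,
          show (j+1) + (n+1) = ((j+n) + 1) + 1 from by omega,
          show n + 1 - 1 = n from rfl]
      rw [pow_succ, pow_succ, bz]
      push_cast
      linear_combination ((n:ℂ)+1) * (Real.sqrt Real.pi : ℂ) * (Real.sqrt 2:ℂ)^(j+n)
        * HC j n z ((starRingEnd ℂ) z) * h2

lemma coe_eval (p : Polynomial ℝ) (r : ℝ) :
    ((p.eval r : ℝ) : ℂ) = (p.map (algebraMap ℝ ℂ)).eval ((r:ℝ):ℂ) := by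
  rw [eval_map, show ((r:ℝ):ℂ) = algebraMap ℝ ℂ r from rfl, eval₂_at_apply]
  rfl

lemma sqrt_two_ne_zero : Real.sqrt 2 ≠ 0 := by positivity

lemma arg_eq (z : ℂ) (t : ℝ) : 2 * z.re / Real.sqrt 2 - t = az z - t := by
  have h : 2 * z.re / Real.sqrt 2 = Real.sqrt 2 * z.re := by
    rw [div_eq_iff sqrt_two_ne_zero]
    have h2 := Real.mul_self_sqrt (by norm_num : (0:ℝ) ≤ 2)
    linear_combination (-z.re) * h2
  rw [az, h]

def Fc (z : ℂ) (j k : ℕ) (t : ℝ) : ℂ :=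
  NormedSpace.exp (-(((t : ℝ) : ℂ) ^ 2 + z ^ 2) / 2 + ((Real.sqrt 2 * t : ℝ) : ℂ) * z)
    * ((physHermite k (2 * z.re / Real.sqrt 2 - t) : ℝ) : ℂ)
    * ((hermiteFun j t : ℝ) : ℂ)

lemma integrand_eq (z : ℂ) (j k : ℕ) (t : ℝ) :
    Fc z j k t = Eg (bz z) (cz z) t * (Wk z k * Pc j).eval ((t:ℝ):ℂ) := by
  have hexp : ∀ w : ℂ, NormedSpace.exp w = Complex.exp w := fun w => by
    rw [← Complex.exp_eq_exp_ℂ]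
  have hsplit : ((Real.exp (-t^2/2) * (Ph j).eval t : ℝ) : ℂ)
      = Complex.exp (((-t^2/2 : ℝ)):ℂ) * (Pc j).eval ((t:ℝ):ℂ) := by
    rw [Complex.ofReal_mul, coe_eval, Complex.ofReal_exp, Pc]
  rw [Fc, hexp, arg_eq, hermiteFun, physHermite_eq, physHermite_eq, hsplit, coe_eval]
  rw [eval_mul, Wk, eval_comp, eval_sub, eval_C, eval_X, ← Pc]
  have hA : (((az z - t :ℝ)):ℂ) = ((az z :ℝ):ℂ) - ((t:ℝ):ℂ) := by push_cast; ring
  have hE : Complex.exp (-(((t:ℝ):ℂ) ^ 2 + z ^ 2) / 2 + ((Real.sqrt 2 * t : ℝ) : ℂ) * z)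
      * Complex.exp (((-t^2/2 : ℝ)):ℂ)
      = Eg (bz z) (cz z) t := by
    rw [Eg, ← Complex.exp_add]
    congr 1
    rw [bz, cz]
    push_cast
    ring
  rw [hA, ← hE]
  ring

lemma integrable_Fc (z : ℂ) (j k : ℕ) : Integrable (Fc z j k) := by
  have h := integrable_Eg_poly (bz z) (cz z) (Wk z k * Pc j)
  apply h.congr
  filter_upwards with t
  exact (integrand_eq z j k t).symm

lemma main_complex (z : ℂ) (j k : ℕ) :
    (∫ t : ℝ, Fc z j k t)
      = ((Real.sqrt Real.pi * Real.sqrt 2 ^ (j+k) : ℝ) : ℂ) * HC j k z ((starRingEnd ℂ) z) := by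
  have h1 : (∫ t : ℝ, Fc z j k t) = Iint z j k := by
    rw [Iint, Jint]
    apply integral_congr_ae
    filter_upwards with t
    exact integrand_eq z j k t
  rw [h1, Iint_eq]
  push_cast
  ring

-- ===== Part 5 : transfer to the quaternions =====

open scoped Quaternion

open scoped Classical in
def uq (q : ℍ[ℝ]) : ℍ[ℝ] :=
  if q.im = 0 then (show ℍ[ℝ] from ⟨0,1,0,0⟩) else ‖q.im‖⁻¹ • q.im

lemma star_im_self (q : ℍ[ℝ]) : star q.im = -q.im :=
  Quaternion.star_eq_neg.2 (Quaternion.re_im (a := q))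

lemma uq_mul_self (q : ℍ[ℝ]) : uq q * uq q = -1 := by
  rw [uq]
  split_ifs with h
  · ext
    · rw [Quaternion.re_mul]; norm_num
    · rw [Quaternion.imI_mul]; norm_num
    · rw [Quaternion.imJ_mul]; norm_num
    · rw [Quaternion.imK_mul]; norm_num
  · have hn : ‖q.im‖ ≠ 0 := norm_ne_zero_iff.2 h
    have h1 : q.im * star q.im = ((Quaternion.normSq q.im : ℝ) : ℍ[ℝ]) := by
      exact_mod_cast Quaternion.self_mul_star q.im
    rw [star_im_self, mul_neg] at h1
    have hvv : q.im * q.im = -((Quaternion.normSq q.im : ℝ) : ℍ[ℝ]) := by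
      have := congrArg Neg.neg h1
      simpa using this
    rw [smul_mul_smul, hvv, Quaternion.normSq_eq_norm_mul_self, smul_neg, Quaternion.smul_coe]
    have h2 : ‖q.im‖⁻¹ * ‖q.im‖⁻¹ * (‖q.im‖ * ‖q.im‖) = 1 := by field_simp
    rw [h2]
    norm_num

def ι (q : ℍ[ℝ]) : ℂ →ₐ[ℝ] ℍ[ℝ] := Complex.liftAux (uq q) (uq_mul_self q)

lemma ι_cont (q : ℍ[ℝ]) : Continuous (ι q) := by
  have h : (ι q : ℂ → ℍ[ℝ]) = fun z => ((z.re : ℝ) : ℍ[ℝ]) + z.im • uq q := by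
    funext z
    exact Complex.liftAux_apply _ _ z
  rw [h]
  exact (Quaternion.continuous_coe.comp Complex.continuous_re).add
    (Complex.continuous_im.smul continuous_const)

def ζ (q : ℍ[ℝ]) : ℂ := ((q.re : ℝ) : ℂ) + (‖q.im‖ : ℝ) * Complex.I

lemma ζ_re (q : ℍ[ℝ]) : (ζ q).re = q.re := by simp [ζ]

lemma ζ_im (q : ℍ[ℝ]) : (ζ q).im = ‖q.im‖ := by simp [ζ]

lemma smul_u_eq (q : ℍ[ℝ]) : ‖q.im‖ • uq q = q.im := by
  rw [uq]
  split_ifs with h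
  · simp [h]
    exact zero_smul _ _
  · rw [smul_smul, mul_inv_cancel₀ (norm_ne_zero_iff.2 h), one_smul]

lemma ι_ζ (q : ℍ[ℝ]) : ι q (ζ q) = q := by
  rw [ι, Complex.liftAux_apply, ζ_re, ζ_im, smul_u_eq]
  rw [show (algebraMap ℝ ℍ[ℝ]) q.re = ((q.re:ℝ):ℍ[ℝ]) from rfl]
  exact q.re_add_im

lemma star_uq (q : ℍ[ℝ]) : star (uq q) = -(uq q) := by
  rw [uq]
  split_ifs with h
  · ext
    · rw [Quaternion.re_star, Quaternion.re_neg]; norm_num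
    · rw [Quaternion.imI_star, Quaternion.imI_neg]
    · rw [Quaternion.imJ_star, Quaternion.imJ_neg]
    · rw [Quaternion.imK_star, Quaternion.imK_neg]
  · rw [← Quaternion.coe_mul_eq_smul, star_mul, Quaternion.star_coe, star_im_self,
      Quaternion.mul_coe_eq_smul, smul_neg, Quaternion.coe_mul_eq_smul]

lemma star_eq_re_sub_im (q : ℍ[ℝ]) : star q = ((q.re:ℝ):ℍ[ℝ]) - q.im := by
  nth_rewrite 1 [← q.re_add_im]
  rw [star_add, Quaternion.star_coe, star_im_self, sub_eq_add_neg]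

lemma ι_conj (q : ℍ[ℝ]) : ι q ((starRingEnd ℂ) (ζ q)) = star q := by
  rw [ι, Complex.liftAux_apply]
  simp only [Complex.conj_re, Complex.conj_im, ζ_re, ζ_im]
  rw [neg_smul, smul_u_eq, star_eq_re_sub_im]
  rw [show (algebraMap ℝ ℍ[ℝ]) q.re = ((q.re:ℝ):ℍ[ℝ]) from rfl]
  rw [sub_eq_add_neg]

lemma hcoe_ι (q : ℍ[ℝ]) (r : ℝ) : ι q ((r:ℝ):ℂ) = ((r:ℝ):ℍ[ℝ]) := by
  rw [show ((r:ℝ):ℂ) = algebraMap ℝ ℂ r from rfl, AlgHom.commutes]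
  rfl

lemma hre_q (q : ℍ[ℝ]) : (q + star q).re = 2 * (ζ q).re := by
  rw [Quaternion.re_add, Quaternion.re_star, ζ_re]
  ring


/-- the Segal–Bargmann transform of level `k` maps the Hermite function `h_j`
to the quaternionic Hermite polynomial `H^Q_{j,k}`:
`π^{−3/4}(2^k k!)^{−1/2} ∫_ℝ exp(−(t²+q²)/2+√2tq) H_k((q+q̄)/√2−t) h_j(t) dt
  = π^{−1/4} 2^{j/2} (k!)^{−1/2} H^Q_{j,k}(q,q̄)`. -/
theorem stmt17 (j k : ℕ) (q : ℍ[ℝ]) :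
    (Real.pi ^ (-(3 / 4) : ℝ) / Real.sqrt ((2 : ℝ) ^ k * (k.factorial : ℝ))) •
        ∫ t : ℝ,
          NormedSpace.exp
              (-(((t : ℝ) : ℍ[ℝ]) ^ 2 + q ^ 2) / 2 + ((Real.sqrt 2 * t : ℝ) : ℍ[ℝ]) * q) *
            ((physHermite k ((q + star q).re / Real.sqrt 2 - t) : ℝ) : ℍ[ℝ]) *
            ((hermiteFun j t : ℝ) : ℍ[ℝ]) =
      (Real.pi ^ (-(1 / 4) : ℝ) * (2 : ℝ) ^ ((j : ℝ) / 2) / Real.sqrt (k.factorial : ℝ)) •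
        HQ j k q (star q) := by

  have hcont : Continuous (ι q) := ι_cont q
  have hιz : ι q (ζ q) = q := ι_ζ q
  have hιconj : ι q ((starRingEnd ℂ) (ζ q)) = star q := ι_conj q
  let L : ℂ →L[ℝ] ℍ[ℝ] := { toLinearMap := (ι q).toLinearMap, cont := hcont }
  have hL : ∀ x, L x = ι q x := fun x => rfl
  have hpoint : ∀ t : ℝ,
      NormedSpace.exp
          (-(((t : ℝ) : ℍ[ℝ]) ^ 2 + q ^ 2) / 2 + ((Real.sqrt 2 * t : ℝ) : ℍ[ℝ]) * q) *
        ((physHermite k ((q + star q).re / Real.sqrt 2 - t) : ℝ) : ℍ[ℝ]) *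
        ((hermiteFun j t : ℝ) : ℍ[ℝ]) = L (Fc (ζ q) j k t) := by
    intro t
    rw [hL, Fc, hre_q]
    rw [map_mul, map_mul, hcoe_ι, hcoe_ι]
    rw [NormedSpace.map_exp (ι q) hcont]
    congr 3
    rw [map_add, map_div₀, map_neg, map_add, map_pow, map_pow, map_mul, hcoe_ι, hcoe_ι, hιz,
      map_ofNat]
  have h1 : (∫ t : ℝ,
      NormedSpace.exp
          (-(((t : ℝ) : ℍ[ℝ]) ^ 2 + q ^ 2) / 2 + ((Real.sqrt 2 * t : ℝ) : ℍ[ℝ]) * q) *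
        ((physHermite k ((q + star q).re / Real.sqrt 2 - t) : ℝ) : ℍ[ℝ]) *
        ((hermiteFun j t : ℝ) : ℍ[ℝ]))
      = L (∫ t : ℝ, Fc (ζ q) j k t) := by
    rw [← ContinuousLinearMap.integral_comp_comm L (integrable_Fc (ζ q) j k)]
    exact integral_congr_ae (Filter.Eventually.of_forall hpoint)
  rw [h1, main_complex]
  rw [show ((Real.sqrt Real.pi * Real.sqrt 2 ^ (j+k) : ℝ) : ℂ)
        * HC j k (ζ q) ((starRingEnd ℂ) (ζ q))
      = (Real.sqrt Real.pi * Real.sqrt 2 ^ (j+k))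
        • HC j k (ζ q) ((starRingEnd ℂ) (ζ q)) from Complex.real_smul.symm]
  rw [_root_.map_smul, smul_smul]
  have hHQ : L (HC j k (ζ q) ((starRingEnd ℂ) (ζ q))) = HQ j k q (star q) := by
    rw [hL, HC, HQ]
    rw [_root_.map_smul]
    congr 1
    rw [map_sum]
    refine Finset.sum_congr rfl fun i _ => ?_
    rw [_root_.map_smul]
    congr 1
    rw [map_mul, map_pow, map_pow, hιz, hιconj]
  rw [hHQ]
  have hkpos : (0:ℝ) < Real.sqrt (k.factorial) :=
    Real.sqrt_pos.2 (by exact_mod_cast Nat.factorial_pos k)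
  have h2pos : (0:ℝ) < Real.sqrt 2 := by positivity
  have hscalar : (Real.pi ^ (-(3 / 4) : ℝ) / Real.sqrt ((2 : ℝ) ^ k * (k.factorial : ℝ)))
      * (Real.sqrt Real.pi * Real.sqrt 2 ^ (j+k))
      = Real.pi ^ (-(1 / 4) : ℝ) * (2 : ℝ) ^ ((j : ℝ) / 2) / Real.sqrt (k.factorial : ℝ) := by
    have hππ : Real.pi ^ ((-3) / 4 : ℝ) * Real.sqrt Real.pi = Real.pi ^ ((-1) / 4 : ℝ) := by
      rw [Real.sqrt_eq_rpow, ← Real.rpow_add Real.pi_pos]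
      norm_num
    have h2k : Real.sqrt ((2:ℝ)^k * (k.factorial:ℝ))
        = Real.sqrt 2 ^ k * Real.sqrt (k.factorial:ℝ) := by
      rw [Real.sqrt_mul (by positivity)]
      congr 1
      have hsq : ((Real.sqrt 2)^k)^2 = (2:ℝ)^k := by
        rw [← pow_mul, mul_comm, pow_mul, Real.sq_sqrt (by norm_num : (0:ℝ) ≤ 2)]
      rw [show (2:ℝ)^k = ((Real.sqrt 2)^k)^2 from hsq.symm, Real.sqrt_sq (by positivity)]
    have h2j : Real.sqrt 2 ^ j = (2:ℝ) ^ ((j:ℝ)/2) := by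
      rw [Real.sqrt_eq_rpow, ← Real.rpow_natCast ((2:ℝ) ^ ((1:ℝ)/2)) j,
        ← Real.rpow_mul (by norm_num : (0:ℝ) ≤ 2)]
      congr 1
      ring
    rw [pow_add, h2k]
    field_simp
    rw [show (-(3/4):ℝ) = (-3)/4 by norm_num, show (-(1/4):ℝ) = (-1)/4 by norm_num, ← hππ, ← h2j]
  rw [hscalar]
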